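/- If G is a stepwise irregular graph with at least two edges sharing a common vertex, then the line graph L(G) is not stepwise irregular. -/
import Mathlib


open SimpleGraph

noncomputable def deg {V : Type*} (G : SimpleGraph V) (v : V) : ℕ := (G.neighborSet v).ncard

/-- A graph is stepwise irregular if for every edge the endpoint degrees differ by exactly 1. -/
def SI {V : Type*} (G : SimpleGraph V) : Prop :=
  ∀ u v, G.Adj u v → |(deg G u : ℤ) - (deg G v : ℤ)| = 1

section aux

variable {V : Type*} [Fintype V] {G : SimpleGraph V}

lemma img_aux {u v : V} (h : G.Adj u v) :
    Subtype.val '' {f : G.edgeSet | (f : Sym2 V) ≠ s(u, v) ∧ u ∈ (f : Sym2 V)}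
      = (fun w => s(u, w)) '' (G.neighborSet u \ {v}) := by
  ext s
  constructor
  · rintro ⟨⟨f, hf⟩, ⟨hne, hu⟩, rfl⟩
    obtain ⟨w, rfl⟩ := Sym2.mem_iff_exists.mp hu
    refine ⟨w, ⟨?_, ?_⟩, rfl⟩
    · exact G.mem_edgeSet.mp hf
    · intro hw; rw [Set.mem_singleton_iff] at hw; subst hw; exact hne rfl
  · rintro ⟨w, ⟨hw, hwv⟩, rfl⟩
    refine ⟨⟨s(u, w), G.mem_edgeSet.mpr hw⟩, ⟨?_, Sym2.mem_mk_left _ _⟩, rfl⟩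
    simp only [ne_eq, Sym2.congr_right]
    exact fun hc => hwv (Set.mem_singleton_iff.mpr hc)

lemma ncard_aux {u v : V} (h : G.Adj u v) :
    {f : G.edgeSet | (f : Sym2 V) ≠ s(u, v) ∧ u ∈ (f : Sym2 V)}.ncard = deg G u - 1 := by
  have h1 : {f : G.edgeSet | (f : Sym2 V) ≠ s(u, v) ∧ u ∈ (f : Sym2 V)}.ncard
      = (Subtype.val '' {f : G.edgeSet | (f : Sym2 V) ≠ s(u, v) ∧ u ∈ (f : Sym2 V)}).ncard :=
    (Set.ncard_image_of_injective _ Subtype.val_injective).symm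
  rw [h1, img_aux h, Set.ncard_image_of_injective _ (fun a b hab => by
    rcases (by simpa using hab : a = b ∨ u = b ∧ a = u) with h' | ⟨h1', h2'⟩
    · exact h'
    · exact h2'.trans h1')]
  rw [Set.ncard_diff_singleton_of_mem (show v ∈ G.neighborSet u from h)]
  rfl

lemma deg_line {u v : V} (h : G.Adj u v) :
    deg G.lineGraph ⟨s(u, v), h⟩ = (deg G u - 1) + (deg G v - 1) := by
  have hset : (G.lineGraph).neighborSet ⟨s(u, v), h⟩
      = {f : G.edgeSet | (f : Sym2 V) ≠ s(u, v) ∧ u ∈ (f : Sym2 V)}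
        ∪ {f : G.edgeSet | (f : Sym2 V) ≠ s(u, v) ∧ v ∈ (f : Sym2 V)} := by
    ext f
    simp only [mem_neighborSet, lineGraph_adj_iff_exists, Set.mem_union, Set.mem_setOf_eq]
    constructor
    · rintro ⟨hne, x, hx1, hx2⟩
      have hne' : (f : Sym2 V) ≠ s(u, v) := fun hc => hne (Subtype.ext hc.symm)
      rcases Sym2.mem_iff.mp hx1 with rfl | rfl
      · exact Or.inl ⟨hne', hx2⟩
      · exact Or.inr ⟨hne', hx2⟩
    · rintro (⟨hne, hu⟩ | ⟨hne, hv⟩)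
      · exact ⟨fun hc => hne (congrArg Subtype.val hc).symm, u, Sym2.mem_mk_left _ _, hu⟩
      · exact ⟨fun hc => hne (congrArg Subtype.val hc).symm, v, Sym2.mem_mk_right _ _, hv⟩
  have hdisj : Disjoint {f : G.edgeSet | (f : Sym2 V) ≠ s(u, v) ∧ u ∈ (f : Sym2 V)}
      {f : G.edgeSet | (f : Sym2 V) ≠ s(u, v) ∧ v ∈ (f : Sym2 V)} := by
    rw [Set.disjoint_left]
    rintro f ⟨hne, hu⟩ ⟨_, hv⟩
    exact hne ((Sym2.mem_and_mem_iff h.ne).mp ⟨hu, hv⟩)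
  show ((G.lineGraph).neighborSet ⟨s(u, v), h⟩).ncard = _
  rw [hset, Set.ncard_union_eq hdisj (Set.toFinite _) (Set.toFinite _), ncard_aux h]
  congr 1
  have := ncard_aux (G := G) h.symm
  rw [Sym2.eq_swap] at this
  exact this

lemma deg_pos {u v : V} (h : G.Adj u v) : 1 ≤ deg G u :=
  (Set.ncard_pos (Set.toFinite _)).mpr ⟨v, h⟩

end aux

theorem stmt_12 {V : Type*} [Fintype V] (G : SimpleGraph V) (hSI : SI G)
    (h2 : ∃ u v w : V, v ≠ w ∧ G.Adj u v ∧ G.Adj u w) :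
    ¬ SI G.lineGraph := by
  obtain ⟨u, v, w, hvw, huv, huw⟩ := h2
  intro hL
  have hadj : (G.lineGraph).Adj ⟨s(u, v), huv⟩ ⟨s(u, w), huw⟩ := by
    rw [lineGraph_adj_iff_exists]
    refine ⟨fun hc => hvw (Sym2.congr_right.mp (congrArg Subtype.val hc)), u,
      Sym2.mem_mk_left _ _, Sym2.mem_mk_left _ _⟩
  have h1 := hL _ _ hadj
  rw [deg_line huv, deg_line huw] at h1
  have hu := deg_pos huv
  have hv := deg_pos huv.symm
  have hw := deg_pos huw.symm
  have h2 := hSI _ _ huv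
  have h3 := hSI _ _ huw
  have hcv : ((deg G u - 1) + (deg G v - 1) : ℕ) = ((deg G u : ℤ) - 1) + ((deg G v : ℤ) - 1) := by
    push_cast [Nat.cast_sub hu, Nat.cast_sub hv]; ring
  have hcw : ((deg G u - 1) + (deg G w - 1) : ℕ) = ((deg G u : ℤ) - 1) + ((deg G w : ℤ) - 1) := by
    push_cast [Nat.cast_sub hu, Nat.cast_sub hw]; ring
  rw [hcv, hcw] at h1
  rcases abs_eq (by norm_num : (0:ℤ) ≤ 1) |>.mp h1 with h | h <;>
  rcases abs_eq (by norm_num : (0:ℤ) ≤ 1) |>.mp h2 with h2' | h2' <;>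
  rcases abs_eq (by norm_num : (0:ℤ) ≤ 1) |>.mp h3 with h3' | h3' <;>
  omega
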